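/- arXiv:1710.03162 — 7 statements merged into one kernel-verified Lean document; each statement's English description precedes it below -/
import Mathlib

section
/- Let w ∈ ℝ^n with w ≥ 0. For x, y ∈ ℝ^n, the following are equivalent: (a) x + y - √(x² + y² + 2w) = 0, where squares and square roots are taken componentwise; (b) x ≥ 0, y ≥ 0, and x * y = w. -/
lemma aux_3 (w x y : ℝ) (hw : 0 ≤ w)
    (h : x + y - Real.sqrt (x ^ 2 + y ^ 2 + 2 * w) = 0) :
    0 ≤ x ∧ 0 ≤ y ∧ x * y = w := by
  have hnn : 0 ≤ x ^ 2 + y ^ 2 + 2 * w := by positivity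
  have hxy : x + y = Real.sqrt (x ^ 2 + y ^ 2 + 2 * w) := by linarith
  have hpos : 0 ≤ x + y := hxy ▸ Real.sqrt_nonneg _
  have hsq : (x + y) ^ 2 = x ^ 2 + y ^ 2 + 2 * w := by
    rw [hxy, Real.sq_sqrt hnn]
  have hprod : x * y = w := by nlinarith
  have hx : 0 ≤ x := by nlinarith [sq_nonneg (x - y), sq_nonneg x, sq_nonneg y]
  have hy : 0 ≤ y := by nlinarith [sq_nonneg (x - y), sq_nonneg x, sq_nonneg y]
  exact ⟨hx, hy, hprod⟩

theorem stmt_3 (n : ℕ) (w x y : Fin n → ℝ) (hw : ∀ i, 0 ≤ w i) :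
    (∀ i, x i + y i - Real.sqrt ((x i) ^ 2 + (y i) ^ 2 + 2 * w i) = 0) ↔
      ((∀ i, 0 ≤ x i) ∧ (∀ i, 0 ≤ y i) ∧ ∀ i, x i * y i = w i) := by
  constructor
  · intro h
    exact ⟨fun i => (aux_3 _ _ _ (hw i) (h i)).1,
           fun i => (aux_3 _ _ _ (hw i) (h i)).2.1,
           fun i => (aux_3 _ _ _ (hw i) (h i)).2.2⟩
  · rintro ⟨hx, hy, hxy⟩ i
    have : (x i) ^ 2 + (y i) ^ 2 + 2 * w i = (x i + y i) ^ 2 := by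
      rw [← hxy i]; ring
    rw [this, Real.sqrt_sq (by linarith [hx i, hy i])]
    ring
end

section
/- Let x, y ∈ ℝ^n and 0 ≤ t ≤ 1. Then t·(x + y - √(x² + y²)) + (1-t)·min(x,y) = 0 if and only if min(x,y) = 0, where all operations (squaring, square root, min) are componentwise. -/
lemma fb_pos {a b : ℝ} (ha : 0 < a) (hb : 0 < b) :
    0 < a + b - Real.sqrt (a ^ 2 + b ^ 2) := by
  have h : Real.sqrt (a ^ 2 + b ^ 2) < a + b := by
    rw [show a + b = Real.sqrt ((a + b) ^ 2) by
      rw [Real.sqrt_sq (by linarith)]]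
    apply Real.sqrt_lt_sqrt (by positivity)
    nlinarith
  linarith

lemma fb_neg {a b : ℝ} (hm : min a b < 0) :
    a + b - Real.sqrt (a ^ 2 + b ^ 2) < 0 := by
  rcases le_or_gt (a + b) 0 with h | h
  · rcases eq_or_lt_of_le h with h' | h'
    · -- a + b = 0, min < 0 so a,b nonzero; sqrt > 0
      have : 0 < Real.sqrt (a ^ 2 + b ^ 2) := by
        apply Real.sqrt_pos.2
        rcases min_lt_iff.1 hm with h1 | h1 <;> nlinarith
      linarith
    · have : 0 ≤ Real.sqrt (a ^ 2 + b ^ 2) := Real.sqrt_nonneg _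
      linarith
  · -- a+b > 0 and min < 0 ⇒ a*b < 0
    have hab : a * b < 0 := by
      rcases min_lt_iff.1 hm with h1 | h1
      · have : 0 < b := by by_contra h2; push_neg at h2; linarith
        nlinarith
      · have : 0 < a := by by_contra h2; push_neg at h2; linarith
        nlinarith
    have h2 : a + b < Real.sqrt (a ^ 2 + b ^ 2) := by
      rw [show a + b = Real.sqrt ((a + b) ^ 2) by rw [Real.sqrt_sq h.le]]
      apply Real.sqrt_lt_sqrt (by positivity)
      nlinarith
    linarith

lemma fb_zero {a b : ℝ} (hm : min a b = 0) :
    a + b - Real.sqrt (a ^ 2 + b ^ 2) = 0 := by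
  rcases min_eq_iff.1 hm with ⟨ha, hb⟩ | ⟨hb, ha⟩
  · subst ha
    rw [show (0:ℝ) ^ 2 + b ^ 2 = b ^ 2 by ring, Real.sqrt_sq hb]
    ring
  · subst hb
    rw [show a ^ 2 + (0:ℝ) ^ 2 = a ^ 2 by ring, Real.sqrt_sq ha]
    ring

theorem stmt_4 (n : ℕ) (x y : Fin n → ℝ) (t : ℝ) (ht0 : 0 ≤ t) (ht1 : t ≤ 1) :
    (∀ i, t * (x i + y i - Real.sqrt ((x i) ^ 2 + (y i) ^ 2)) + (1 - t) * min (x i) (y i) = 0)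
      ↔ (∀ i, min (x i) (y i) = 0) := by
  constructor
  · intro h i
    have hi := h i
    set A := x i + y i - Real.sqrt ((x i) ^ 2 + (y i) ^ 2) with hA
    rcases lt_trichotomy (min (x i) (y i)) 0 with hm | hm | hm
    · exfalso
      have hAneg : A < 0 := fb_neg hm
      nlinarith [mul_nonneg ht0 (neg_nonneg.2 hAneg.le),
        mul_nonneg (by linarith : (0:ℝ) ≤ 1 - t) (neg_nonneg.2 hm.le),
        mul_pos (neg_pos.2 hAneg) (neg_pos.2 hm)]
    · exact hm
    · exfalso
      have hApos : 0 < A := by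
        exact fb_pos (lt_of_lt_of_le hm (min_le_left _ _))
          (lt_of_lt_of_le hm (min_le_right _ _))
      nlinarith [mul_nonneg ht0 hApos.le,
        mul_nonneg (by linarith : (0:ℝ) ≤ 1 - t) hm.le,
        mul_pos hApos hm]
  · intro h i
    rw [fb_zero (h i), h i]
    ring
end

section
/- Let x, y ∈ ℝ. If for some t with 0 < t < 1 we have t·(x + y - √(x² + y²)) + (1-t)·min(x,y) = 0, then x ≥ 0, y ≥ 0, and x·y = 0. -/
theorem aux_5 (a b t s : ℝ) (ht0 : 0 < t) (ht1 : t < 1) (hab : a ≤ b)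
    (hs0 : 0 ≤ s) (hs2 : s ^ 2 = a ^ 2 + b ^ 2)
    (h : t * (a + b - s) + (1 - t) * a = 0) : a = 0 ∧ 0 ≤ b := by
  have ha : a = 0 := by
    rcases lt_trichotomy a 0 with hlt | heq | hgt
    · -- a < 0 : b ≤ s so the sum is < 0
      have hsb : b ≤ s := by nlinarith [sq_nonneg (s - b), sq_nonneg (s + b)]
      nlinarith [mul_nonneg ht0.le (sub_nonneg.mpr hsb)]
    · exact heq
    · -- a > 0 : s < a + b so the sum is > 0
      have hb : 0 < b := lt_of_lt_of_le hgt hab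
      have hsab : s < a + b := by nlinarith [mul_pos hgt hb, sq_nonneg (s - (a + b))]
      nlinarith [mul_pos ht0 (sub_pos.mpr hsab)]
  refine ⟨ha, ?_⟩
  subst ha
  have h' : t * (b - s) = 0 := by linear_combination h
  rcases mul_eq_zero.mp h' with h'' | h''
  · exact absurd h'' (ne_of_gt ht0)
  · linarith

theorem stmt_5 (x y t : ℝ) (ht0 : 0 < t) (ht1 : t < 1)
    (h : t * (x + y - Real.sqrt (x ^ 2 + y ^ 2)) + (1 - t) * min x y = 0) :
    0 ≤ x ∧ 0 ≤ y ∧ x * y = 0 := by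
  have hs0 : 0 ≤ Real.sqrt (x ^ 2 + y ^ 2) := Real.sqrt_nonneg _
  have hs2 : Real.sqrt (x ^ 2 + y ^ 2) ^ 2 = x ^ 2 + y ^ 2 :=
    Real.sq_sqrt (by positivity)
  rcases le_total x y with hxy | hxy
  · rw [min_eq_left hxy] at h
    obtain ⟨hx, hy⟩ := aux_5 x y t _ ht0 ht1 hxy hs0 hs2 h
    exact ⟨le_of_eq hx.symm, hy, by rw [hx, zero_mul]⟩
  · rw [min_eq_right hxy] at h
    obtain ⟨hy, hx⟩ := aux_5 y x t _ ht0 ht1 hxy hs0 (by linarith) (by linarith)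
    exact ⟨hx, le_of_eq hy.symm, by rw [hy, mul_zero]⟩
end

section
/- Let A, B, X, Y be n×n real matrices with X and Y commuting (XY = YX). Then the determinant of the 2n×2n block matrix [[A, -B], [X, Y]] equals det(AY + BX). -/
open Matrix Polynomial

lemma aux_det {m : Type*} [DecidableEq m] [Fintype m] {α : Type*} [CommRing α]
    (A B X Y : Matrix m m α) [Invertible Y] (hXY : X * Y = Y * X) :
    (fromBlocks A (-B) X Y).det = (A * Y + B * X).det := by
  rw [det_fromBlocks₂₂]
  have hX : ⅟Y * (X * Y) = X := by rw [hXY, ← Matrix.mul_assoc, invOf_mul_self, Matrix.one_mul]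
  rw [← det_mul, det_mul_comm]
  congr 1
  simp only [Matrix.sub_mul, Matrix.neg_mul, sub_neg_eq_add, Matrix.mul_assoc]
  rw [Matrix.add_mul, Matrix.mul_assoc B, Matrix.mul_assoc, hX]

lemma map_blocks {α β : Type*} [CommRing α] [CommRing β] (f : α →+* β) {k : Type*}
    [Fintype k] [DecidableEq k] (A B Xm Ym : Matrix k k α) :
    (fromBlocks A (-B) Xm Ym).map f
      = fromBlocks (A.map f) (-(B.map f)) (Xm.map f) (Ym.map f) := by
  have h : (-B).map ⇑f = -(B.map ⇑f) := by ext i j; exact f.map_neg _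
  rw [fromBlocks_map, h]

lemma map_sum_mul {α β : Type*} [CommRing α] [CommRing β] (f : α →+* β) {k : Type*}
    [Fintype k] [DecidableEq k] (A B Xm Ym : Matrix k k α) :
    (A * Ym + B * Xm).map f = A.map f * Ym.map f + B.map f * Xm.map f := by
  rw [Matrix.map_add (⇑f) (map_add f), Matrix.map_mul, Matrix.map_mul]

theorem stmt_7 (n : ℕ) (A B X Y : Matrix (Fin n) (Fin n) ℝ) (hXY : X * Y = Y * X) :
    (Matrix.fromBlocks A (-B) X Y).det = (A * Y + B * X).det := by
  let K := RatFunc ℝ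
  let f : ℝ[X] →+* K := algebraMap _ _
  have hf : Function.Injective f := IsFractionRing.injective ℝ[X] K
  let g : ℝ →+* ℝ[X] := C
  let Ap := A.map g
  let Bp := B.map g
  let Xp := X.map g
  let Yp : Matrix (Fin n) (Fin n) ℝ[X] := Y.map g + (Polynomial.X : ℝ[X]) • (1 : Matrix (Fin n) (Fin n) ℝ[X])
  have hYp : Yp = charmatrix (-Y) := by
    ext i j
    simp [Yp, g, charmatrix_apply, Matrix.one_apply, Matrix.diagonal, Matrix.add_apply,
      Matrix.smul_apply, apply_ite, add_comm]
  have hdet : Yp.det ≠ 0 := by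
    rw [hYp]
    exact (Matrix.charpoly_monic (-Y)).ne_zero
  have hdetK : IsUnit ((Yp.map f).det) := by
    rw [← RingHom.mapMatrix_apply, ← RingHom.map_det]
    exact isUnit_iff_ne_zero.mpr (fun h => hdet (hf (by simpa using h)))
  have : Invertible (Yp.map f) := (Yp.map f).invertibleOfIsUnitDet hdetK
  have hcomm : Xp * Yp = Yp * Xp := by
    simp only [Yp, Xp, Matrix.mul_add, Matrix.add_mul, Matrix.mul_smul, Matrix.smul_mul,
      Matrix.mul_one, Matrix.one_mul, ← Matrix.map_mul, hXY]
  have hcommK : (Xp.map f) * (Yp.map f) = (Yp.map f) * (Xp.map f) := by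
    rw [← Matrix.map_mul, hcomm, Matrix.map_mul]
  have hK := aux_det (Ap.map f) (Bp.map f) (Xp.map f) (Yp.map f) hcommK
  have hR : (fromBlocks Ap (-Bp) Xp Yp).det = (Ap * Yp + Bp * Xp).det := by
    apply hf
    rw [RingHom.map_det, RingHom.map_det]
    simp only [RingHom.mapMatrix_apply]
    rw [map_blocks, map_sum_mul]
    exact hK
  let e : ℝ[X] →+* ℝ := evalRingHom 0
  have hAe : Ap.map e = A := by ext i j; simp [Ap, g, e]
  have hBe : Bp.map e = B := by ext i j; simp [Bp, g, e]
  have hXe : Xp.map e = X := by ext i j; simp [Xp, g, e]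
  have hYe : Yp.map e = Y := by ext i j; simp [Yp, g, e, Matrix.one_apply, apply_ite]
  have := congrArg e hR
  rw [RingHom.map_det, RingHom.map_det] at this
  simp only [RingHom.mapMatrix_apply] at this
  rw [map_blocks, map_sum_mul, hAe, hBe, hXe, hYe] at this
  exact this
end

section
/- Let A, B : ℝ^n → ℝ^n be linear maps such that the only pair (x,y) with min(x,y) = 0 and Ax + By = 0 is (0,0). Then for any p ∈ ℝ^n, the set {(x,y) ∈ ℝ^n × ℝ^n : min(x,y) = 0 and Ax + By = t·p for some t ∈ [0,1]} is bounded. -/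
theorem stmt_8 (n : ℕ) (A B : (Fin n → ℝ) →ₗ[ℝ] (Fin n → ℝ))
    (hR0 : ∀ x y : Fin n → ℝ, (∀ i, min (x i) (y i) = 0) → A x + B y = 0 → x = 0 ∧ y = 0)
    (p : Fin n → ℝ) :
    Bornology.IsBounded {z : (Fin n → ℝ) × (Fin n → ℝ) |
      (∀ i, min (z.1 i) (z.2 i) = 0) ∧ ∃ t ∈ Set.Icc (0 : ℝ) 1, A z.1 + B z.2 = t • p} := by
  classical
  set C : Set ((Fin n → ℝ) × (Fin n → ℝ)) := {z | ∀ i, min (z.1 i) (z.2 i) = 0} with hC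
  -- the linear map z ↦ A z.1 + B z.2
  set L : ((Fin n → ℝ) × (Fin n → ℝ)) →ₗ[ℝ] (Fin n → ℝ) := A.coprod B with hL
  have hLcont : Continuous L := L.continuous_of_finiteDimensional
  have hCclosed : IsClosed C := by
    have : C = ⋂ i, {z : (Fin n → ℝ) × (Fin n → ℝ) | min (z.1 i) (z.2 i) = 0} := by
      ext z; simp [hC, Set.mem_iInter]
    rw [this]
    refine isClosed_iInter fun i => isClosed_eq ?_ continuous_const
    exact Continuous.min ((continuous_apply i).comp continuous_fst)
      ((continuous_apply i).comp continuous_snd)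
  -- cone property
  have hcone : ∀ (a : ℝ), 0 ≤ a → ∀ z ∈ C, a • z ∈ C := by
    intro a ha z hz i
    have := hz i
    have : min (a * z.1 i) (a * z.2 i) = a * min (z.1 i) (z.2 i) :=
      (mul_min_of_nonneg _ _ ha).symm
    simp [Prod.smul_fst, Prod.smul_snd, this, hz i]
  -- L is nonzero on nonzero points of C
  have hLpos : ∀ z ∈ C, z ≠ 0 → 0 < ‖L z‖ := by
    intro z hz hz0
    rcases eq_or_lt_of_le (norm_nonneg (L z)) with h | h
    · exfalso
      have hL0 : L z = 0 := by
        have := h.symm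
        rwa [norm_eq_zero] at this
      have : A z.1 + B z.2 = 0 := by simpa [hL, LinearMap.coprod_apply] using hL0
      obtain ⟨h1, h2⟩ := hR0 z.1 z.2 hz this
      exact hz0 (Prod.ext h1 h2)
    · exact h
  -- compact set: C ∩ sphere
  set K : Set ((Fin n → ℝ) × (Fin n → ℝ)) := C ∩ Metric.sphere 0 1 with hK
  have hKcompact : IsCompact K := (isCompact_sphere 0 1).inter_left hCclosed
  -- obtain lower bound c > 0 on K
  obtain ⟨c, hc0, hcK⟩ : ∃ c : ℝ, 0 < c ∧ ∀ z ∈ K, c ≤ ‖L z‖ := by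
    rcases K.eq_empty_or_nonempty with hKe | hKne
    · exact ⟨1, one_pos, by simp [hKe]⟩
    · obtain ⟨z₀, hz₀K, hz₀min⟩ := hKcompact.exists_isMinOn hKne
        (hLcont.norm.continuousOn)
      refine ⟨‖L z₀‖, ?_, fun z hz => hz₀min hz⟩
      apply hLpos z₀ hz₀K.1
      intro h0
      have : ‖z₀‖ = 1 := by simpa using hz₀K.2
      rw [h0] at this; simp at this
  -- key inequality on C
  have hkey : ∀ z ∈ C, c * ‖z‖ ≤ ‖L z‖ := by
    intro z hz
    rcases eq_or_ne z 0 with rfl | hz0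
    · simp
    · have hnz : (0:ℝ) < ‖z‖ := norm_pos_iff.mpr hz0
      set a : ℝ := ‖z‖⁻¹ with ha
      have ha0 : 0 < a := inv_pos.mpr hnz
      have hw : a • z ∈ K := by
        refine ⟨hcone a ha0.le z hz, ?_⟩
        simp [norm_smul, ha, abs_of_pos ha0, inv_mul_cancel₀ hnz.ne']
      have := hcK _ hw
      rw [map_smul, norm_smul, Real.norm_eq_abs, abs_of_pos ha0] at this
      have h2 : c * ‖z‖ ≤ (a * ‖L z‖) * ‖z‖ := by nlinarith [norm_nonneg (L z)]
      calc c * ‖z‖ ≤ a * ‖L z‖ * ‖z‖ := h2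
        _ = ‖L z‖ := by rw [ha, mul_right_comm, inv_mul_cancel₀ hnz.ne', one_mul]
  -- conclude boundedness
  rw [isBounded_iff_forall_norm_le]
  refine ⟨‖p‖ / c, ?_⟩
  rintro z ⟨hzC, t, ⟨ht0, ht1⟩, hzt⟩
  have hLz : ‖L z‖ ≤ ‖p‖ := by
    have : L z = t • p := by simpa [hL, LinearMap.coprod_apply] using hzt
    rw [this, norm_smul, Real.norm_eq_abs, abs_of_nonneg ht0]
    nlinarith [norm_nonneg p]
  have := hkey z hzC
  rw [le_div_iff₀ hc0]
  linarith
end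

section
/- Let A, B : ℝ^n → ℝ^n be linear maps forming a P-pair (whenever x * y ≤ 0 componentwise and Ax + By = 0, then (x,y) = (0,0)). Then for every w ∈ ℝ^n with w ≥ 0 and every q ∈ ℝ^n, the weighted horizontal LCP has at most one solution: if (x₁,y₁) and (x₂,y₂) both satisfy x ≥ 0, y ≥ 0, x * y = w, Ax + By = q, then x₁ = x₂ and y₁ = y₂. -/
theorem stmt_13 (n : ℕ) (A B : (Fin n → ℝ) →ₗ[ℝ] (Fin n → ℝ))
    (hP : ∀ x y : Fin n → ℝ, (∀ i, x i * y i ≤ 0) → A x + B y = 0 → x = 0 ∧ y = 0)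
    (w q : Fin n → ℝ) (hw : ∀ i, 0 ≤ w i)
    (x₁ y₁ x₂ y₂ : Fin n → ℝ)
    (hx₁ : ∀ i, 0 ≤ x₁ i) (hy₁ : ∀ i, 0 ≤ y₁ i) (hw₁ : ∀ i, x₁ i * y₁ i = w i)
    (hq₁ : A x₁ + B y₁ = q)
    (hx₂ : ∀ i, 0 ≤ x₂ i) (hy₂ : ∀ i, 0 ≤ y₂ i) (hw₂ : ∀ i, x₂ i * y₂ i = w i)
    (hq₂ : A x₂ + B y₂ = q) :
    x₁ = x₂ ∧ y₁ = y₂ := by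
  have key : ∀ i, (x₁ - x₂) i * (y₁ - y₂) i ≤ 0 := by
    intro i
    simp only [Pi.sub_apply]
    nlinarith [hw₁ i, hw₂ i, hw i, mul_nonneg (hx₁ i) (hy₂ i),
      mul_nonneg (hx₂ i) (hy₁ i), sq_nonneg (x₁ i * y₂ i - x₂ i * y₁ i)]
  have heq : A (x₁ - x₂) + B (y₁ - y₂) = 0 := by
    rw [map_sub, map_sub]
    linear_combination hq₁ - hq₂
  obtain ⟨h1, h2⟩ := hP _ _ key heq
  exact ⟨sub_eq_zero.mp h1, sub_eq_zero.mp h2⟩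
end

section
/- Let A, B : ℝ^n → ℝ^n be linear maps such that for every q ∈ ℝ^n the horizontal LCP (find x ≥ 0, y ≥ 0 with x * y = 0 and Ax + By = q) has a unique solution. Then {A,B} is a P-pair: whenever x * y ≤ 0 componentwise and Ax + By = 0, we have (x,y) = (0,0). -/
theorem stmt_14 (n : ℕ) (A B : (Fin n → ℝ) →ₗ[ℝ] (Fin n → ℝ))
    (hU : ∀ q : Fin n → ℝ, ∃! z : (Fin n → ℝ) × (Fin n → ℝ),
      (∀ i, 0 ≤ z.1 i) ∧ (∀ i, 0 ≤ z.2 i) ∧ (∀ i, z.1 i * z.2 i = 0) ∧ A z.1 + B z.2 = q) :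
    ∀ x y : Fin n → ℝ, (∀ i, x i * y i ≤ 0) → A x + B y = 0 → x = 0 ∧ y = 0 := by
  intro x y hxy hAB
  set xp : Fin n → ℝ := fun i => max (x i) 0 with hxpdef
  set xm : Fin n → ℝ := fun i => max (-x i) 0 with hxmdef
  set yp : Fin n → ℝ := fun i => max (y i) 0 with hypdef
  set ym : Fin n → ℝ := fun i => max (-y i) 0 with hymdef
  have hx : x = xp - xm := by
    funext i
    simp only [hxpdef, hxmdef, Pi.sub_apply]
    rcases le_total (x i) 0 with h | h
    · rw [max_eq_right h, max_eq_left (by linarith)]; ring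
    · rw [max_eq_left h, max_eq_right (by linarith)]; ring
  have hy : y = yp - ym := by
    funext i
    simp only [hypdef, hymdef, Pi.sub_apply]
    rcases le_total (y i) 0 with h | h
    · rw [max_eq_right h, max_eq_left (by linarith)]; ring
    · rw [max_eq_left h, max_eq_right (by linarith)]; ring
  set q : Fin n → ℝ := A xm + B ym with hq
  have h1 : (∀ i, 0 ≤ xp i) ∧ (∀ i, 0 ≤ yp i) ∧ (∀ i, xp i * yp i = 0) ∧ A xp + B yp = q := by
    refine ⟨fun i => le_max_right _ _, fun i => le_max_right _ _, ?_, ?_⟩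
    · intro i
      rcases le_or_gt (x i) 0 with h | h
      · have : xp i = 0 := max_eq_right h
        rw [this, zero_mul]
      · have hyi : y i ≤ 0 := by nlinarith [hxy i]
        have : yp i = 0 := max_eq_right hyi
        rw [this, mul_zero]
    · have : A (xp - xm) + B (yp - ym) = 0 := by rw [← hx, ← hy]; exact hAB
      rw [map_sub, map_sub] at this
      rw [hq]
      abel_nf
      abel_nf at this
      linear_combination (norm := abel) this
  have h2 : (∀ i, 0 ≤ xm i) ∧ (∀ i, 0 ≤ ym i) ∧ (∀ i, xm i * ym i = 0) ∧ A xm + B ym = q := by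
    refine ⟨fun i => le_max_right _ _, fun i => le_max_right _ _, ?_, rfl⟩
    intro i
    rcases le_or_gt 0 (x i) with h | h
    · have : xm i = 0 := max_eq_right (by linarith)
      rw [this, zero_mul]
    · have hyi : 0 ≤ y i := by nlinarith [hxy i]
      have : ym i = 0 := max_eq_right (by linarith)
      rw [this, mul_zero]
  have heq : ((xp, yp) : (Fin n → ℝ) × (Fin n → ℝ)) = (xm, ym) :=
    (hU q).unique h1 h2
  have hxeq : xp = xm := congrArg Prod.fst heq
  have hyeq : yp = ym := congrArg Prod.snd heq
  constructor
  · rw [hx, hxeq, sub_self]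
  · rw [hy, hyeq, sub_self]
end
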